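/- Let n ≥ 2 and let G = (ℤ_2)^n be the n-cube with coordinatewise addition. Let ν be the probability measure on G with ν(s) = 1/(n+1) if the weight w(s) is 0 or 1, and ν(s) = 0 otherwise (the nearest-neighbour walk with loops on the n-cube). Let k ∈ ℕ and c > 0 be such that k = (n+1)(log n + c)/4. Then ‖ν^{⋆k} − π‖² ≤ (1/2)(e^{e^{−c}} − 1). -/

import Mathlib

open Finset

/-- Convolution on a finite additive group: `(aconv μ ν) s = ∑ t, μ (s - t) * ν t`. -/
noncomputable def aconv {G : Type*} [AddGroup G] [Fintype G] (μ ν : G → ℝ) : G → ℝ :=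
  fun s => ∑ t, μ (s - t) * ν t

/-- Convolution powers: `aconvPow ν 0 = δ_0`, `aconvPow ν (k+1) = aconv ν (aconvPow ν k)`. -/
noncomputable def aconvPow {G : Type*} [AddGroup G] [Fintype G] [DecidableEq G]
    (ν : G → ℝ) : ℕ → G → ℝ
  | 0 => fun s => if s = 0 then 1 else 0
  | k + 1 => aconv ν (aconvPow ν k)

/-- Total variation distance. -/
noncomputable def tv {G : Type*} [Fintype G] (μ ν : G → ℝ) : ℝ :=
  (1 / 2) * ∑ s, |μ s - ν s|

/-- The weight of `s ∈ (ℤ₂)ⁿ`: the number of coordinates equal to 1. -/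
def cubeWeight {n : ℕ} (s : Fin n → ZMod 2) : ℕ :=
  (Finset.univ.filter (fun i => s i = 1)).card


noncomputable def zsgn : ZMod 2 → ℝ := fun a => if a = 0 then 1 else -1

lemma zmod2_cases : ∀ a : ZMod 2, a = 0 ∨ a = 1 := by decide

lemma zsgn_add (a b : ZMod 2) : zsgn (a + b) = zsgn a * zsgn b := by
  have h11 : (1 + 1 : ZMod 2) = 0 := by decide
  rcases zmod2_cases a with h | h <;> rcases zmod2_cases b with h' | h' <;>
    subst h <;> subst h' <;> simp [zsgn, h11]

lemma zsgn_zero : zsgn 0 = 1 := by simp [zsgn]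

noncomputable def chi {n : ℕ} (x s : Fin n → ZMod 2) : ℝ := ∏ i, zsgn (x i * s i)

lemma chi_zero {n : ℕ} (x : Fin n → ZMod 2) : chi x 0 = 1 := by
  simp [chi, zsgn]

lemma chi_comm {n : ℕ} (x s : Fin n → ZMod 2) : chi x s = chi s x := by
  simp [chi, mul_comm]

lemma chi_add_right {n : ℕ} (x s t : Fin n → ZMod 2) :
    chi x (s + t) = chi x s * chi x t := by
  simp only [chi, ← Finset.prod_mul_distrib]
  refine Finset.prod_congr rfl fun i _ => ?_
  simp [Pi.add_apply, mul_add, zsgn_add]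

lemma sum_zsgn_mul (u : ZMod 2) :
    ∑ a : ZMod 2, zsgn (a * u) = if u = 0 then 2 else 0 := by
  rcases zmod2_cases u with h | h <;> subst h <;>
    simp [show (Finset.univ : Finset (ZMod 2)) = {0, 1} from by decide, zsgn]

lemma sum_chi {n : ℕ} (u : Fin n → ZMod 2) :
    ∑ x : Fin n → ZMod 2, chi x u = if u = 0 then (2 ^ n : ℝ) else 0 := by
  have h1 : ∑ x : Fin n → ZMod 2, chi x u
      = ∏ i, ∑ a : ZMod 2, zsgn (a * u i) := by
    rw [Finset.prod_univ_sum]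
    rw [← Fintype.piFinset_univ]
    rfl
  rw [h1]
  simp only [sum_zsgn_mul]
  by_cases hu : u = 0
  · subst hu; simp
  · rw [if_neg hu]
    obtain ⟨i, hi⟩ : ∃ i, u i ≠ 0 := by
      by_contra h; push_neg at h; exact hu (funext h)
    exact Finset.prod_eq_zero (Finset.mem_univ i) (by simp [hi])

noncomputable def Fhat {n : ℕ} (f : (Fin n → ZMod 2) → ℝ) (x : Fin n → ZMod 2) : ℝ :=
  ∑ s, f s * chi x s

lemma zmod2_neg : ∀ a : ZMod 2, -a = a := by decide
lemma zmod2_add_self : ∀ a : ZMod 2, a + a = 0 := by decide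

lemma neg_self_zmod2 {n : ℕ} (s : Fin n → ZMod 2) : -s = s := by
  funext i; exact zmod2_neg (s i)

lemma Fhat_aconv {n : ℕ} (μ f : (Fin n → ZMod 2) → ℝ) (x : Fin n → ZMod 2) :
    Fhat (aconv μ f) x = Fhat μ x * Fhat f x := by
  unfold Fhat aconv
  simp only [Finset.sum_mul, Finset.mul_sum]
  rw [Finset.sum_comm]
  refine Finset.sum_congr rfl fun t _ => ?_
  have he := Fintype.sum_equiv (Equiv.addRight t)
    (fun u => μ u * chi x u * (f t * chi x t))
    (fun s => μ (s - t) * f t * chi x s)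
    (fun u => by
      simp only [Equiv.coe_addRight, add_sub_cancel_right, chi_add_right]
      ring)
  rw [← he, ← Finset.sum_mul]

lemma Fhat_pow {n : ℕ} (f : (Fin n → ZMod 2) → ℝ) (k : ℕ) (x : Fin n → ZMod 2) :
    Fhat (aconvPow f k) x = (Fhat f x) ^ k := by
  induction k with
  | zero =>
    unfold aconvPow Fhat
    simp [chi_zero]
  | succ k ih =>
    show Fhat (aconv f (aconvPow f k)) x = _
    rw [Fhat_aconv, ih, pow_succ]
    ring

lemma parseval {n : ℕ} (f : (Fin n → ZMod 2) → ℝ) :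
    ∑ x, (Fhat f x) ^ 2 = 2 ^ n * ∑ s, (f s) ^ 2 := by
  unfold Fhat
  have key : ∀ x : Fin n → ZMod 2, (∑ s, f s * chi x s) ^ 2
      = ∑ s, ∑ t, f s * f t * chi x (s + t) := by
    intro x
    rw [sq, Finset.sum_mul_sum]
    refine Finset.sum_congr rfl fun s _ => Finset.sum_congr rfl fun t _ => ?_
    rw [chi_add_right]; ring
  simp only [key]
  rw [Finset.sum_comm]
  have : ∀ s : Fin n → ZMod 2, ∑ x, ∑ t, f s * f t * chi x (s + t)
      = (2 : ℝ) ^ n * (f s) ^ 2 := by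
    intro s
    rw [Finset.sum_comm]
    have h1 : ∀ t : Fin n → ZMod 2, ∑ x, f s * f t * chi x (s + t)
        = f s * f t * (if s + t = 0 then (2 : ℝ) ^ n else 0) := by
      intro t
      rw [← Finset.mul_sum, sum_chi]
    simp only [h1]
    have h2 : ∀ t : Fin n → ZMod 2, s + t = 0 ↔ t = s := by
      intro t
      constructor
      · intro h
        have h' := congrArg (fun v => -s + v) h
        simp only [neg_add_cancel_left, add_zero] at h'
        rw [h', neg_self_zmod2]
      · intro h; subst h
        funext i; exact zmod2_add_self _
    simp only [h2, mul_ite, mul_zero]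
    rw [Finset.sum_ite_eq' Finset.univ s (fun t => f s * f t * 2 ^ n)]
    simp [sq]; ring
  simp only [this]
  rw [← Finset.mul_sum]

lemma zmod2_one_ne_zero : (1 : ZMod 2) ≠ 0 := by decide

lemma cubeWeight_eq_zero_iff {n : ℕ} (s : Fin n → ZMod 2) :
    cubeWeight s = 0 ↔ s = 0 := by
  unfold cubeWeight
  rw [Finset.card_eq_zero, Finset.filter_eq_empty_iff]
  constructor
  · intro h
    funext i
    rcases zmod2_cases (s i) with h' | h'
    · exact h'
    · exact absurd h' (h (Finset.mem_univ i))
  · intro h i _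
    rw [h]
    exact fun hh => zmod2_one_ne_zero hh.symm

/-- basis vector -/
def cubeE {n : ℕ} (i : Fin n) : Fin n → ZMod 2 := fun j => if j = i then 1 else 0

lemma chi_cubeE {n : ℕ} (x : Fin n → ZMod 2) (i : Fin n) :
    chi x (cubeE i) = zsgn (x i) := by
  unfold chi cubeE
  rw [Finset.prod_eq_single i]
  · simp
  · intro j _ hj
    simp [hj, zsgn]
  · simp

lemma cubeE_inj {n : ℕ} : Function.Injective (cubeE (n := n)) := by
  intro i j h
  by_contra hij
  have h1 := congrFun h i
  simp only [cubeE, if_pos rfl, if_neg hij] at h1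
  exact zmod2_one_ne_zero h1

lemma weight_one_eq_image {n : ℕ} :
    (Finset.univ.filter (fun s : Fin n → ZMod 2 => cubeWeight s = 1))
      = Finset.univ.image cubeE := by
  ext s
  simp only [Finset.mem_filter, Finset.mem_univ, true_and, Finset.mem_image]
  constructor
  · intro h
    obtain ⟨i, hi⟩ := Finset.card_eq_one.mp h
    refine ⟨i, ?_⟩
    funext j
    rcases zmod2_cases (s j) with h' | h'
    · rw [h']
      unfold cubeE
      rw [if_neg]
      intro hji
      subst hji
      have : j ∈ Finset.univ.filter (fun i => s i = 1) := by
        rw [hi]; exact Finset.mem_singleton_self j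
      simp only [Finset.mem_filter] at this
      rw [h'] at this
      exact zmod2_one_ne_zero this.2.symm
    · have hj : j ∈ Finset.univ.filter (fun i => s i = 1) := by
        simp [h']
      rw [hi, Finset.mem_singleton] at hj
      subst hj
      simp [cubeE, h']
  · rintro ⟨i, rfl⟩
    unfold cubeWeight
    rw [Finset.card_eq_one]
    refine ⟨i, ?_⟩
    ext j
    simp only [Finset.mem_filter, Finset.mem_univ, true_and, Finset.mem_singleton, cubeE]
    constructor
    · intro h
      by_contra hji
      replace h := (Finset.mem_filter.mp h).2
      rw [if_neg hji] at h
      exact zmod2_one_ne_zero h.symm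
    · intro h; subst h; simp

lemma sum_zsgn_eq {n : ℕ} (x : Fin n → ZMod 2) :
    ∑ i, zsgn (x i) = (n : ℝ) - 2 * cubeWeight x := by
  rw [← Finset.sum_filter_add_sum_filter_not Finset.univ (fun i => x i = 1)]
  have h1 : ∀ i ∈ Finset.univ.filter (fun i => x i = 1), zsgn (x i) = -1 := by
    intro i hi
    simp only [Finset.mem_filter] at hi
    rw [hi.2]
    simp [zsgn, zmod2_one_ne_zero]
  have h2 : ∀ i ∈ Finset.univ.filter (fun i => ¬ x i = 1), zsgn (x i) = 1 := by
    intro i hi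
    simp only [Finset.mem_filter] at hi
    rcases zmod2_cases (x i) with h | h
    · rw [h]; simp [zsgn]
    · exact absurd h hi.2
  rw [Finset.sum_congr rfl h1, Finset.sum_congr rfl h2]
  rw [Finset.sum_const, Finset.sum_const]
  have hcard : (Finset.univ.filter (fun i => ¬ x i = 1)).card
      = n - cubeWeight x := by
    have := Finset.card_filter_add_card_filter_not
      (s := (Finset.univ : Finset (Fin n))) (p := fun i => x i = 1)
    simp only [Finset.card_univ, Fintype.card_fin] at this
    unfold cubeWeight
    omega
  have hle : cubeWeight x ≤ n := by
    unfold cubeWeight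
    calc _ ≤ (Finset.univ : Finset (Fin n)).card := Finset.card_filter_le _ _
    _ = n := by simp
  unfold cubeWeight at hle
  rw [hcard]
  unfold cubeWeight
  simp only [nsmul_eq_mul, smul_eq_mul]
  rw [Nat.cast_sub hle]
  ring

lemma Fhat_nu {n : ℕ} (ν : (Fin n → ZMod 2) → ℝ)
    (hν : ν = fun s => if cubeWeight s = 0 ∨ cubeWeight s = 1
        then 1 / ((n : ℝ) + 1) else 0) (x : Fin n → ZMod 2) :
    Fhat ν x = 1 - 2 * cubeWeight x / ((n : ℝ) + 1) := by
  subst hν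
  unfold Fhat
  simp only [ite_mul, zero_mul]
  rw [← Finset.sum_filter]
  rw [Finset.filter_or]
  have hdisj : Disjoint (Finset.univ.filter (fun s : Fin n → ZMod 2 => cubeWeight s = 0))
      (Finset.univ.filter (fun s : Fin n → ZMod 2 => cubeWeight s = 1)) := by
    rw [Finset.disjoint_filter]
    intro s _ h0 h1
    omega
  rw [Finset.sum_union hdisj]
  have e0 : (Finset.univ.filter (fun s : Fin n → ZMod 2 => cubeWeight s = 0)) = {0} := by
    ext s
    simp [cubeWeight_eq_zero_iff]
  rw [e0, weight_one_eq_image, Finset.sum_singleton, chi_zero,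
    Finset.sum_image (fun i _ j _ h => cubeE_inj h)]
  simp only [chi_cubeE]
  rw [← Finset.mul_sum, sum_zsgn_eq]
  have hN : ((n : ℝ) + 1) ≠ 0 := by positivity
  field_simp
  ring

noncomputable def cubeEquiv (n : ℕ) : Finset (Fin n) ≃ (Fin n → ZMod 2) where
  toFun S := fun i => if i ∈ S then 1 else 0
  invFun x := Finset.univ.filter (fun i => x i = 1)
  left_inv S := by
    ext i
    simp only [Finset.mem_filter, Finset.mem_univ, true_and]
    constructor
    · intro h
      by_contra hi
      rw [if_neg hi] at h
      exact zmod2_one_ne_zero h.symm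
    · intro h; rw [if_pos h]
  right_inv x := by
    funext i
    simp only [Finset.mem_filter, Finset.mem_univ, true_and]
    rcases zmod2_cases (x i) with h | h
    · rw [h, if_neg (fun hh : (0:ZMod 2) = 1 => zmod2_one_ne_zero hh.symm)]
    · rw [h]; simp

lemma cubeWeight_cubeEquiv {n : ℕ} (S : Finset (Fin n)) :
    cubeWeight (cubeEquiv n S) = S.card := by
  unfold cubeWeight
  congr 1
  ext i
  simp only [Finset.mem_filter, Finset.mem_univ, true_and, cubeEquiv, Equiv.coe_fn_mk]
  constructor
  · intro h
    by_contra hi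
    replace h := (Finset.mem_filter.mp h).2
    rw [if_neg hi] at h
    exact zmod2_one_ne_zero h.symm
  · intro h; exact Finset.mem_filter.mpr ⟨Finset.mem_univ _, by simp [h]⟩

lemma sum_cubeWeight {n : ℕ} (g : ℕ → ℝ) :
    ∑ x : Fin n → ZMod 2, g (cubeWeight x)
      = ∑ j ∈ Finset.range (n + 1), (n.choose j : ℝ) * g j := by
  rw [← Fintype.sum_equiv (cubeEquiv n) (fun S => g S.card)
    (fun x => g (cubeWeight x)) (fun S => by simp only [cubeWeight_cubeEquiv])]
  rw [show (Finset.univ : Finset (Finset (Fin n))) = Finset.univ.powerset from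
    (Finset.powerset_univ).symm]
  rw [Finset.sum_powerset_apply_card]
  simp only [Finset.card_univ, Fintype.card_fin, nsmul_eq_mul]


-- choose bound: C(n,m) ≤ n^m / m!
lemma choose_le_pow_div (n m : ℕ) : (n.choose m : ℝ) ≤ (n : ℝ) ^ m / m.factorial := by
  rw [le_div_iff₀ (by positivity)]
  have h : (m.factorial * n.choose m : ℕ) ≤ n ^ m := by
    rw [← Nat.descFactorial_eq_factorial_mul_choose]
    exact Nat.descFactorial_le_pow n m
  calc ((n.choose m : ℝ)) * m.factorial = ((m.factorial * n.choose m : ℕ) : ℝ) := by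
        push_cast; ring
  _ ≤ ((n ^ m : ℕ) : ℝ) := by exact_mod_cast h
  _ = (n : ℝ) ^ m := by push_cast; ring

-- the one-sub-exp bound, powered
lemma pow_one_sub_le_exp (y : ℝ) (hy0 : 0 ≤ 1 - y) (K : ℕ) :
    (1 - y) ^ K ≤ Real.exp (-(y * K)) := by
  have h1 : 1 - y ≤ Real.exp (-y) := by
    have := Real.add_one_le_exp (-y)
    linarith
  calc (1 - y) ^ K ≤ (Real.exp (-y)) ^ K := pow_le_pow_left₀ hy0 h1 K
  _ = Real.exp (-(y * K)) := by
      rw [← Real.exp_nat_mul]; ring_nf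

-- partial exp sum bound
lemma sum_exp_tail (c : ℝ) (hc : 0 ≤ c) (n : ℕ) :
    ∑ m ∈ Finset.Icc 1 n, Real.exp (-c) ^ m / m.factorial
      ≤ Real.exp (Real.exp (-c)) - 1 := by
  have h0 : Finset.range (n + 1) = insert 0 (Finset.Icc 1 n) := by
    ext j
    simp only [Finset.mem_range, Finset.mem_insert, Finset.mem_Icc]
    omega
  have h1 := Real.sum_le_exp_of_nonneg (x := Real.exp (-c)) (Real.exp_nonneg _) (n + 1)
  rw [h0, Finset.sum_insert (by simp)] at h1
  simp only [pow_zero, Nat.factorial_zero, Nat.cast_one] at h1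
  linarith

lemma lower_half_pow_bound (n : ℕ) (hn : 2 ≤ n) (c : ℝ) (k : ℕ)
    (hk : (k : ℝ) = ((n : ℝ) + 1) * (Real.log n + c) / 4)
    (m : ℕ) (hm2 : 2 * m ≤ n + 1) :
    (1 - 2 * m / ((n : ℝ) + 1)) ^ (2 * k)
      ≤ Real.exp (-c) ^ m / (n : ℝ) ^ m := by
  have hN : (0 : ℝ) < (n : ℝ) + 1 := by positivity
  have hn0 : (0 : ℝ) < (n : ℝ) := by
    have : (2 : ℝ) ≤ (n : ℝ) := by exact_mod_cast hn
    linarith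
  have hy0 : (0 : ℝ) ≤ 1 - 2 * m / ((n : ℝ) + 1) := by
    rw [sub_nonneg, div_le_one hN]
    have : (2 * m : ℝ) ≤ ((n : ℝ) + 1) := by exact_mod_cast hm2
    linarith
  have h1 := pow_one_sub_le_exp (2 * m / ((n : ℝ) + 1)) hy0 (2 * k)
  have harg : -(2 * m / ((n : ℝ) + 1) * (2 * k : ℕ))
      = (m : ℝ) * (-Real.log n) + (m : ℝ) * (-c) := by
    push_cast
    rw [hk]
    field_simp
    ring
  rw [harg, Real.exp_add, Real.exp_nat_mul, Real.exp_nat_mul,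
    Real.exp_neg, Real.exp_log hn0] at h1
  calc (1 - 2 * m / ((n : ℝ) + 1)) ^ (2 * k) ≤ _ := h1
  _ = Real.exp (-c) ^ m / (n : ℝ) ^ m := by
      rw [inv_pow]
      field_simp

lemma analytic_bound (n : ℕ) (hn : 2 ≤ n) (c : ℝ) (hc : 0 < c) (k : ℕ)
    (hk : (k : ℝ) = ((n : ℝ) + 1) * (Real.log n + c) / 4) :
    ∑ j ∈ Finset.Icc 1 n, (n.choose j : ℝ) * (1 - 2 * j / ((n : ℝ) + 1)) ^ (2 * k)
      ≤ 2 * (Real.exp (Real.exp (-c)) - 1) := by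
  set t : ℕ → ℝ := fun m => Real.exp (-c) ^ m / m.factorial with ht
  have ht0 : ∀ m, 0 ≤ t m := fun m => by positivity
  have hn0 : (0 : ℝ) < (n : ℝ) := by
    have : (2 : ℝ) ≤ (n : ℝ) := by exact_mod_cast hn
    linarith
  -- Step 1: per-term bound
  have step1 : ∀ j ∈ Finset.Icc 1 n,
      (n.choose j : ℝ) * (1 - 2 * j / ((n : ℝ) + 1)) ^ (2 * k)
        ≤ t (min j (n + 1 - j)) := by
    intro j hj
    rw [Finset.mem_Icc] at hj
    obtain ⟨hj1, hjn⟩ := hj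
    by_cases hcase : 2 * j ≤ n + 1
    · -- lower half
      have hmin : min j (n + 1 - j) = j := by omega
      rw [hmin]
      have hb1 := choose_le_pow_div n j
      have hb2 := lower_half_pow_bound n hn c k hk j hcase
      have hpow0 : (0 : ℝ) ≤ (1 - 2 * j / ((n : ℝ) + 1)) ^ (2 * k) := by
        have hy0 : (0 : ℝ) ≤ 1 - 2 * j / ((n : ℝ) + 1) := by
          rw [sub_nonneg, div_le_one (by positivity)]
          have : (2 * j : ℝ) ≤ ((n : ℝ) + 1) := by exact_mod_cast hcase
          linarith
        positivity
      calc (n.choose j : ℝ) * (1 - 2 * j / ((n : ℝ) + 1)) ^ (2 * k)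
          ≤ ((n : ℝ) ^ j / j.factorial) * (Real.exp (-c) ^ j / (n : ℝ) ^ j) := by
            apply mul_le_mul hb1 hb2 hpow0 (by positivity)
      _ = t j := by
            rw [ht]
            have hne : ((n:ℝ) ^ j) ≠ 0 := by positivity
            field_simp
    · -- upper half
      push_neg at hcase
      set m := n + 1 - j with hm
      have hm1 : 1 ≤ m := by omega
      have hm2 : 2 * m ≤ n := by omega
      have hmn : m ≤ n := by omega
      have hmin : min j (n + 1 - j) = m := by omega
      rw [hmin]
      have hcastm : (m : ℝ) = (n : ℝ) + 1 - j := by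
        rw [hm, Nat.cast_sub (by omega : j ≤ n + 1)]
        push_cast; ring
      have hneg : (1 - 2 * j / ((n : ℝ) + 1)) = -(1 - 2 * m / ((n : ℝ) + 1)) := by
        rw [hcastm]
        field_simp
        ring
      have heven : (1 - 2 * j / ((n : ℝ) + 1)) ^ (2 * k)
          = (1 - 2 * m / ((n : ℝ) + 1)) ^ (2 * k) := by
        rw [hneg, Even.neg_pow ⟨k, by ring⟩]
      rw [heven]
      have hb2 := lower_half_pow_bound n hn c k hk m (by omega)
      have hchoose : (n.choose j : ℝ) = (n.choose (m - 1) : ℝ) := by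
        rw [← Nat.choose_symm hjn]
        congr 2
        omega
      have hb1 := choose_le_pow_div n (m - 1)
      have hpow0 : (0 : ℝ) ≤ (1 - 2 * m / ((n : ℝ) + 1)) ^ (2 * k) := by
        have hy0 : (0 : ℝ) ≤ 1 - 2 * m / ((n : ℝ) + 1) := by
          rw [sub_nonneg, div_le_one (by positivity)]
          have : (2 * m : ℝ) ≤ (n : ℝ) := by exact_mod_cast hm2
          linarith
        positivity
      calc (n.choose j : ℝ) * (1 - 2 * m / ((n : ℝ) + 1)) ^ (2 * k)
          ≤ ((n : ℝ) ^ (m - 1) / (m - 1).factorial)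
              * (Real.exp (-c) ^ m / (n : ℝ) ^ m) := by
            rw [hchoose]
            apply mul_le_mul hb1 hb2 hpow0 (by positivity)
      _ = Real.exp (-c) ^ m / ((n : ℝ) * (m - 1).factorial) := by
            have hpowsplit : (n : ℝ) ^ m = (n : ℝ) * (n : ℝ) ^ (m - 1) := by
              conv_lhs => rw [show m = 1 + (m - 1) by omega]
              rw [pow_add, pow_one]
            rw [hpowsplit]
            have h1 : ((n:ℝ) ^ (m-1)) ≠ 0 := by positivity
            have h2 : ((m-1).factorial : ℝ) ≠ 0 := by positivity
            field_simp
      _ ≤ t m := by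
            rw [ht]
            apply div_le_div_of_nonneg_left (by positivity) (by positivity)
            have hfactN : m.factorial = m * (m - 1).factorial := by
              conv_lhs => rw [show m = (m - 1) + 1 by omega]
              rw [Nat.factorial_succ, show (m - 1) + 1 = m by omega]
            have hfact : (m.factorial : ℝ) = (m : ℝ) * ((m - 1).factorial : ℝ) := by
              rw [hfactN]; push_cast; ring
            rw [hfact]
            apply mul_le_mul_of_nonneg_right _ (by positivity)
            exact_mod_cast hmn
  -- Step 2: sum of mins ≤ 2 * sum
  have step2 : ∑ j ∈ Finset.Icc 1 n, t (min j (n + 1 - j))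
      ≤ 2 * ∑ m ∈ Finset.Icc 1 n, t m := by
    rw [← Finset.sum_filter_add_sum_filter_not (Finset.Icc 1 n) (fun j => 2 * j ≤ n + 1)]
    have hA : ∑ j ∈ (Finset.Icc 1 n).filter (fun j => 2 * j ≤ n + 1), t (min j (n + 1 - j))
        = ∑ j ∈ (Finset.Icc 1 n).filter (fun j => 2 * j ≤ n + 1), t j := by
      refine Finset.sum_congr rfl fun j hj => ?_
      simp only [Finset.mem_filter, Finset.mem_Icc] at hj
      congr 1
      omega
    have hB : ∑ j ∈ (Finset.Icc 1 n).filter (fun j => ¬ 2 * j ≤ n + 1), t (min j (n + 1 - j))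
        = ∑ j ∈ (Finset.Icc 1 n).filter (fun j => ¬ 2 * j ≤ n + 1), t (n + 1 - j) := by
      refine Finset.sum_congr rfl fun j hj => ?_
      simp only [Finset.mem_filter, Finset.mem_Icc] at hj
      congr 1
      omega
    rw [hA, hB]
    have hA2 : ∑ j ∈ (Finset.Icc 1 n).filter (fun j => 2 * j ≤ n + 1), t j
        ≤ ∑ m ∈ Finset.Icc 1 n, t m :=
      Finset.sum_le_sum_of_subset_of_nonneg (Finset.filter_subset _ _)
        (fun m _ _ => ht0 m)
    have hB2 : ∑ j ∈ (Finset.Icc 1 n).filter (fun j => ¬ 2 * j ≤ n + 1), t (n + 1 - j)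
        ≤ ∑ m ∈ Finset.Icc 1 n, t m := by
      have hinj : ∀ x ∈ (Finset.Icc 1 n).filter (fun j => ¬ 2 * j ≤ n + 1),
          ∀ y ∈ (Finset.Icc 1 n).filter (fun j => ¬ 2 * j ≤ n + 1),
          n + 1 - x = n + 1 - y → x = y := by
        intro x hx y hy hxy
        simp only [Finset.mem_filter, Finset.mem_Icc] at hx hy
        omega
      have himg := Finset.sum_image (f := t) (g := fun j => n + 1 - j) hinj
      rw [← himg]
      apply Finset.sum_le_sum_of_subset_of_nonneg _ (fun m _ _ => ht0 m)
      intro m hm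
      simp only [Finset.mem_image, Finset.mem_filter, Finset.mem_Icc] at hm
      obtain ⟨j, ⟨⟨hj1, hjn⟩, hj2⟩, rfl⟩ := hm
      rw [Finset.mem_Icc]
      omega
    linarith
  calc ∑ j ∈ Finset.Icc 1 n, (n.choose j : ℝ) * (1 - 2 * j / ((n : ℝ) + 1)) ^ (2 * k)
      ≤ ∑ j ∈ Finset.Icc 1 n, t (min j (n + 1 - j)) := Finset.sum_le_sum step1
  _ ≤ 2 * ∑ m ∈ Finset.Icc 1 n, t m := step2
  _ ≤ 2 * (Real.exp (Real.exp (-c)) - 1) := by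
      have := sum_exp_tail c (le_of_lt hc) n
      linarith

lemma Fhat_sub {n : ℕ} (f h : (Fin n → ZMod 2) → ℝ) (x : Fin n → ZMod 2) :
    Fhat (fun s => f s - h s) x = Fhat f x - Fhat h x := by
  unfold Fhat
  rw [← Finset.sum_sub_distrib]
  exact Finset.sum_congr rfl fun s _ => by ring

lemma Fhat_unif {n : ℕ} (x : Fin n → ZMod 2) :
    Fhat (fun _ => 1 / (2 ^ n : ℝ)) x = if x = 0 then 1 else 0 := by
  unfold Fhat
  rw [← Finset.mul_sum, Finset.sum_congr rfl (fun s _ => chi_comm x s), sum_chi]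
  by_cases hx : x = 0
  · rw [if_pos hx, if_pos hx]
    field_simp
  · rw [if_neg hx, if_neg hx, mul_zero]

/-- upper bound for the nearest-neighbour walk with loops on the `n`-cube:
for `k = (n+1)(log n + c)/4`, `‖ν^{⋆k} − π‖² ≤ (1/2)(e^{e^{−c}} − 1)`. -/
theorem n_cube_walk_upper_bound
    (n : ℕ) (hn : 2 ≤ n)
    (ν : (Fin n → ZMod 2) → ℝ)
    (hν : ν = fun s => if cubeWeight s = 0 ∨ cubeWeight s = 1
        then 1 / ((n : ℝ) + 1) else 0)
    (c : ℝ) (hc : 0 < c) (k : ℕ)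
    (hk : (k : ℝ) = ((n : ℝ) + 1) * (Real.log n + c) / 4) :
    tv (aconvPow ν k) (fun _ => 1 / (2 ^ n : ℝ)) ^ 2
      ≤ (1 / 2) * (Real.exp (Real.exp (-c)) - 1) := by
  set μ := aconvPow ν k with hμ
  set pr : (Fin n → ZMod 2) → ℝ := fun _ => 1 / (2 ^ n : ℝ) with hpr
  set g : (Fin n → ZMod 2) → ℝ := fun s => μ s - pr s with hg
  -- step 1: tv² = (1/4)(∑|g|)²
  have h1 : tv μ pr ^ 2 = (1 / 4) * (∑ s, |g s|) ^ 2 := by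
    unfold tv
    ring
  -- step 2: Cauchy-Schwarz
  have hcard : ((Finset.univ : Finset (Fin n → ZMod 2)).card : ℝ) = 2 ^ n := by
    rw [Finset.card_univ]
    simp [Fintype.card_fun]
  have h2 : (∑ s, |g s|) ^ 2 ≤ 2 ^ n * ∑ s, g s ^ 2 := by
    have := sq_sum_le_card_mul_sum_sq
      (s := (Finset.univ : Finset (Fin n → ZMod 2))) (f := fun s => |g s|)
    simp only [sq_abs] at this
    calc (∑ s, |g s|) ^ 2 ≤ ((Finset.univ : Finset (Fin n → ZMod 2)).card : ℝ)
          * ∑ s, g s ^ 2 := this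
    _ = 2 ^ n * ∑ s, g s ^ 2 := by rw [hcard]
  -- step 3: Parseval
  have h3 : (2 : ℝ) ^ n * ∑ s, g s ^ 2 = ∑ x, (Fhat g x) ^ 2 := (parseval g).symm
  -- step 4: Fourier coefficients
  have hFμ : ∀ x, Fhat μ x = (1 - 2 * cubeWeight x / ((n : ℝ) + 1)) ^ k := by
    intro x
    rw [hμ, Fhat_pow, Fhat_nu ν hν]
  have hFg : ∀ x, Fhat g x ^ 2
      = (1 - 2 * cubeWeight x / ((n : ℝ) + 1)) ^ (2 * k)
        - (if x = 0 then 1 else 0) := by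
    intro x
    rw [hg]
    rw [Fhat_sub, Fhat_unif, hFμ]
    by_cases hx : x = 0
    · subst hx
      have hw0 : cubeWeight (0 : Fin n → ZMod 2) = 0 := by
        rw [cubeWeight_eq_zero_iff]
      simp [hw0]
    · simp only [if_neg hx, sub_zero, ← pow_mul, mul_comm k 2]
  -- step 5: sum the squares
  have h5 : ∑ x, (Fhat g x) ^ 2
      = ∑ j ∈ Finset.Icc 1 n,
          (n.choose j : ℝ) * (1 - 2 * j / ((n : ℝ) + 1)) ^ (2 * k) := by
    have hsum1 : ∑ x, (Fhat g x) ^ 2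
        = (∑ x : Fin n → ZMod 2, (1 - 2 * cubeWeight x / ((n : ℝ) + 1)) ^ (2 * k))
          - 1 := by
      rw [Finset.sum_congr rfl (fun x _ => hFg x), Finset.sum_sub_distrib]
      congr 1
      rw [Finset.sum_ite_eq' Finset.univ (0 : Fin n → ZMod 2) (fun _ => (1 : ℝ))]
      simp
    rw [hsum1]
    rw [sum_cubeWeight (fun j => (1 - 2 * (j : ℝ) / ((n : ℝ) + 1)) ^ (2 * k))]
    have hrange : Finset.range (n + 1) = insert 0 (Finset.Icc 1 n) := by
      ext j
      simp only [Finset.mem_range, Finset.mem_insert, Finset.mem_Icc]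
      omega
    rw [hrange, Finset.sum_insert (by simp)]
    simp only [Nat.choose_zero_right, Nat.cast_zero, Nat.cast_one]
    norm_num
  -- combine
  have h6 := analytic_bound n hn c hc k hk
  calc tv μ pr ^ 2 = (1 / 4) * (∑ s, |g s|) ^ 2 := h1
  _ ≤ (1 / 4) * (2 ^ n * ∑ s, g s ^ 2) := by linarith [h2]
  _ = (1 / 4) * ∑ x, (Fhat g x) ^ 2 := by rw [h3]
  _ = (1 / 4) * ∑ j ∈ Finset.Icc 1 n,
        (n.choose j : ℝ) * (1 - 2 * j / ((n : ℝ) + 1)) ^ (2 * k) := by rw [h5]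
  _ ≤ (1 / 4) * (2 * (Real.exp (Real.exp (-c)) - 1)) := by linarith [h6]
  _ = (1 / 2) * (Real.exp (Real.exp (-c)) - 1) := by ring
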